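/- Soundness of the abstract filter: Let T be a finite training set, n : ℕ, Ψ a finite nonempty list of decidable predicates on inputs, and x an input. Let L be the list of abstract training sets consisting of ⟨T, n⟩|#φ for each φ ∈ Ψ with φ(x), followed by ⟨T, n⟩|#¬φ for each φ ∈ Ψ with ¬φ(x), and let A be the left fold of ⊔ over L starting from its head (L is nonempty since every φ ∈ Ψ either holds or fails at x). Then for every T' ∈ Δₙ(T) and every φ' ∈ Ψ, filter(T', φ', x) ∈ γ(A). -/

import Mathlib

/-- The n-poisoning perturbed set: all subsets of `T` missing at most `n` elements. -/
def Perturb {α : Type*} [DecidableEq α] (T : Finset α) (n : ℕ) : Set (Finset α) :=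
  {T' | T' ⊆ T ∧ (T \ T').card ≤ n}

/-- Concretization of an abstract training set `⟨T, n⟩`. -/
def aGamma {α : Type*} [DecidableEq α] (A : Finset α × ℕ) : Set (Finset α) :=
  Perturb A.1 A.2

/-- Join of abstract training sets. -/
def aJoin {α : Type*} [DecidableEq α] (A B : Finset α × ℕ) : Finset α × ℕ :=
  (A.1 ∪ B.1, max ((A.1 \ B.1).card + B.2) ((B.1 \ A.1).card + A.2))

variable {X : Type*} [DecidableEq X] {k : ℕ}

/-- Abstract restriction `⟨T, n⟩|#φ = ⟨T|φ, min(n, |T|φ|)⟩`, for a (decidable,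
Bool-valued) predicate on inputs applied to the first component. -/
def aRestrict (T : Finset (X × Fin k)) (n : ℕ) (φ : X × Fin k → Prop)
    [DecidablePred φ] : Finset (X × Fin k) × ℕ :=
  (T.filter φ, min n (T.filter φ).card)

/-- The concrete filter: `T'|φ'` if `φ'(x)` holds, and `T'|¬φ'` otherwise. -/
def cFilter (T' : Finset (X × Fin k)) (φ : X → Bool) (x : X) : Finset (X × Fin k) :=
  if φ x then T'.filter (fun e => φ e.1 = true) else T'.filter (fun e => φ e.1 = false)

/-- The list of abstract training sets `⟨T, n⟩|#φ` for each `φ ∈ Ψ` with `φ(x)`,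
followed by `⟨T, n⟩|#¬φ` for each `φ ∈ Ψ` with `¬φ(x)`. -/
def filterList (T : Finset (X × Fin k)) (n : ℕ) (Ψ : List (X → Bool)) (x : X) :
    List (Finset (X × Fin k) × ℕ) :=
  (Ψ.filter fun φ => φ x).map (fun φ => aRestrict T n (fun e => φ e.1 = true)) ++
  (Ψ.filter fun φ => !(φ x)).map (fun φ => aRestrict T n (fun e => φ e.1 = false))

/-- Soundness of the abstract filter: for a nonempty list `Ψ` of predicates,
every `T' ∈ Δₙ(T)` and every `φ' ∈ Ψ`, the concrete filter of `T'` by `φ'` lies in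
the concretization of the left fold of the join over the list `filterList T n Ψ x`
starting from its head. -/
lemma gamma_join_left {α : Type*} [DecidableEq α] (A B : Finset α × ℕ) :
    aGamma A ⊆ aGamma (aJoin A B) := by
  rintro S ⟨hsub, hcard⟩
  constructor
  · exact hsub.trans (Finset.subset_union_left)
  · calc ((A.1 ∪ B.1) \ S).card ≤ ((A.1 \ S) ∪ (B.1 \ A.1)).card := by
          apply Finset.card_le_card
          intro a ha
          simp only [Finset.mem_sdiff, Finset.mem_union] at ha ⊢
          rcases ha with ⟨h1 | h1, h2⟩
          · exact Or.inl ⟨h1, h2⟩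
          · by_cases hA : a ∈ A.1
            · exact Or.inl ⟨hA, h2⟩
            · exact Or.inr ⟨h1, hA⟩
      _ ≤ (A.1 \ S).card + (B.1 \ A.1).card := Finset.card_union_le _ _
      _ ≤ A.2 + (B.1 \ A.1).card := by omega
      _ ≤ max ((A.1 \ B.1).card + B.2) ((B.1 \ A.1).card + A.2) := by omega

lemma gamma_join_right {α : Type*} [DecidableEq α] (A B : Finset α × ℕ) :
    aGamma B ⊆ aGamma (aJoin A B) := by
  rintro S ⟨hsub, hcard⟩
  constructor
  · exact hsub.trans (Finset.subset_union_right)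
  · calc ((A.1 ∪ B.1) \ S).card ≤ ((B.1 \ S) ∪ (A.1 \ B.1)).card := by
          apply Finset.card_le_card
          intro a ha
          simp only [Finset.mem_sdiff, Finset.mem_union] at ha ⊢
          rcases ha with ⟨h1 | h1, h2⟩
          · by_cases hB : a ∈ B.1
            · exact Or.inl ⟨hB, h2⟩
            · exact Or.inr ⟨h1, hB⟩
          · exact Or.inl ⟨h1, h2⟩
      _ ≤ (B.1 \ S).card + (A.1 \ B.1).card := Finset.card_union_le _ _
      _ ≤ B.2 + (A.1 \ B.1).card := by omega
      _ ≤ max ((A.1 \ B.1).card + B.2) ((B.1 \ A.1).card + A.2) := by omega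

lemma gamma_foldl_acc {α : Type*} [DecidableEq α] (L : List (Finset α × ℕ))
    (acc : Finset α × ℕ) : aGamma acc ⊆ aGamma (L.foldl aJoin acc) := by
  induction L generalizing acc with
  | nil => exact fun _ h => h
  | cons h t ih =>
    exact fun S hS => ih (aJoin acc h) (gamma_join_left acc h hS)

lemma gamma_foldl_mem {α : Type*} [DecidableEq α] (L : List (Finset α × ℕ))
    (acc B : Finset α × ℕ) (hB : B ∈ L) :
    aGamma B ⊆ aGamma (L.foldl aJoin acc) := by
  induction L generalizing acc with
  | nil => simp at hB
  | cons h t ih =>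
    rcases List.mem_cons.mp hB with rfl | hB
    · exact fun S hS => gamma_foldl_acc t (aJoin acc B) (gamma_join_right acc B hS)
    · exact ih (aJoin acc h) hB

lemma restrict_sound (T T' : Finset (X × Fin k)) (n : ℕ)
    (hT' : T' ∈ Perturb T n) (p : X × Fin k → Prop) [DecidablePred p] :
    T'.filter p ∈ aGamma (aRestrict T n p) := by
  obtain ⟨hsub, hcard⟩ := hT'
  constructor
  · exact Finset.filter_subset_filter p hsub
  · have h1 : T.filter p \ T'.filter p ⊆ (T \ T').filter p := by
      intro a ha
      simp only [Finset.mem_sdiff, Finset.mem_filter] at ha ⊢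
      tauto
    have h2 := Finset.card_le_card h1
    have h3 := Finset.card_le_card (Finset.filter_subset p (T \ T'))
    have h4 := Finset.card_le_card (Finset.sdiff_subset (s := T.filter p) (t := T'.filter p))
    simp only [aRestrict]
    omega

lemma gamma_fold_of_mem {α : Type*} [DecidableEq α] (L : List (Finset α × ℕ))
    (B : Finset α × ℕ) (hB : B ∈ L) :
    aGamma B ⊆ aGamma (L.tail.foldl aJoin L.headI) := by
  cases L with
  | nil => simp at hB
  | cons h t =>
    rcases List.mem_cons.mp hB with rfl | hB
    · exact gamma_foldl_acc t B
    · exact gamma_foldl_mem t h B hB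

theorem afilter_sound (hk : 1 ≤ k) (T : Finset (X × Fin k)) (n : ℕ)
    (Ψ : List (X → Bool)) (hΨ : Ψ ≠ []) (x : X)
    (T' : Finset (X × Fin k)) (hT' : T' ∈ Perturb T n)
    (φ' : X → Bool) (hφ' : φ' ∈ Ψ) :
    cFilter T' φ' x ∈
      aGamma ((filterList T n Ψ x).tail.foldl aJoin (filterList T n Ψ x).headI) := by
  have key : ∀ E ∈ filterList T n Ψ x, aGamma E ⊆
      aGamma ((filterList T n Ψ x).tail.foldl aJoin (filterList T n Ψ x).headI) :=
    fun E hE => gamma_fold_of_mem _ E hE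
  unfold cFilter
  by_cases hx : φ' x = true
  · rw [if_pos hx]
    apply key (aRestrict T n (fun e => φ' e.1 = true))
    · unfold filterList
      apply List.mem_append_left
      exact List.mem_map_of_mem (List.mem_filter.mpr ⟨hφ', by simp [hx]⟩)
    · exact restrict_sound T T' n hT' _
  · rw [if_neg hx]
    apply key (aRestrict T n (fun e => φ' e.1 = false))
    · unfold filterList
      apply List.mem_append_right
      exact List.mem_map_of_mem (List.mem_filter.mpr ⟨hφ', by simp [Bool.not_eq_true] at hx ⊢; exact hx⟩)
    · exact restrict_sound T T' n hT' _
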